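/- arXiv:math/0003024 — 5 statements merged into one kernel-verified Lean document; each statement's English description precedes it below -/
import Mathlib

section
/- If p̄₁ p₂ lies in the subfield ℂ = ℝ ⊕ ℝ i of ℍ and (p₁,p₂) ≠ (0,0), then the kernel of T = T_{p₁,p₂} is invariant under the complex structure induced by left quaternionic multiplication by i: if (u₁,u₂) ∈ Ker T then (i u₁, i u₂) ∈ Ker T. -/
/-- The linear part `T(u₁,u₂) = p₁u₁ + p₂u₂` of the map `τ` used to superpose
NS-5-branes. -/
noncomputable def braneMap (p₁ p₂ : Quaternion ℝ) (u : Quaternion ℝ × Quaternion ℝ) : Quaternion ℝ :=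
  p₁ * u.1 + p₂ * u.2

/-- The imaginary unit `i` of the quaternions. -/
def quatI : Quaternion ℝ := ⟨0, 1, 0, 0⟩

/-- If `p̄₁ p₂` lies in the subfield `ℂ = ℝ ⊕ ℝi` of ℍ and
`(p₁,p₂) ≠ (0,0)`, then the kernel of `T = T_{p₁,p₂}` is invariant under the
complex structure induced by left quaternionic multiplication by `i`:
if `(u₁,u₂) ∈ Ker T` then `(i u₁, i u₂) ∈ Ker T`. -/
theorem braneMap_ker_leftI_invariant_of_complex
    (p₁ p₂ : Quaternion ℝ) (h : (p₁, p₂) ≠ (0, 0))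
    (hcplx : ∃ a b : ℝ, star p₁ * p₂ = (a : Quaternion ℝ) + (b : Quaternion ℝ) * quatI) :
    ∀ u : Quaternion ℝ × Quaternion ℝ, braneMap p₁ p₂ u = 0 →
      braneMap p₁ p₂ (quatI * u.1, quatI * u.2) = 0 := by
  intro u hu
  unfold braneMap at hu ⊢
  by_cases hp1 : p₁ = 0
  · have hp2 : p₂ ≠ 0 := fun hp2 => h (by simp [hp1, hp2])
    have hu2 : u.2 = 0 := by
      have h0 : p₂ * u.2 = 0 := by simpa [hp1] using hu
      rcases mul_eq_zero.mp h0 with h' | h'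
      · exact absurd h' hp2
      · exact h'
    simp [hp1, hu2]
  · obtain ⟨a, b, hab⟩ := hcplx
    have hcomm : quatI * (star p₁ * p₂) = (star p₁ * p₂) * quatI := by
      rw [hab]
      rw [mul_add, add_mul, ← mul_assoc, Quaternion.coe_commutes, Quaternion.coe_commutes, mul_assoc]
    have hNr : Quaternion.normSq p₁ ≠ 0 := Quaternion.normSq_ne_zero.mpr hp1
    have h1 : (Quaternion.normSq p₁) • u.1 = -((star p₁ * p₂) * u.2) := by
      have h2 := congrArg (fun x => star p₁ * x) hu
      simp only [mul_add, ← mul_assoc, Quaternion.star_mul_self, mul_zero] at h2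
      rw [Quaternion.coe_mul_eq_smul] at h2
      exact eq_neg_of_add_eq_zero_left h2
    have hps : p₁ * star p₁ = ((Quaternion.normSq p₁ : ℝ) : Quaternion ℝ) :=
      Quaternion.self_mul_star p₁
    have key : Quaternion.normSq p₁ • (p₁ * (quatI * u.1) + p₂ * (quatI * u.2)) = 0 := by
      rw [smul_add, ← mul_smul_comm, ← mul_smul_comm, h1]
      calc p₁ * (quatI * -(star p₁ * p₂ * u.2)) + Quaternion.normSq p₁ • (p₂ * (quatI * u.2))
          = -(p₁ * (quatI * (star p₁ * p₂)) * u.2) + Quaternion.normSq p₁ • (p₂ * (quatI * u.2)) := by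
            simp only [mul_neg, mul_assoc]
        _ = -((p₁ * star p₁) * (p₂ * (quatI * u.2))) + Quaternion.normSq p₁ • (p₂ * (quatI * u.2)) := by
            rw [hcomm]; simp only [mul_assoc]
        _ = 0 := by
            rw [hps, Quaternion.coe_mul_eq_smul, neg_add_cancel]
    rcases smul_eq_zero.mp key with h' | h'
    · exact absurd h' hNr
    · exact h'
end

section
/- The superposed intersecting NS-5-brane metric is hermitian with respect to the hypercomplex structure J induced by right quaternionic multiplication: given finitely many triples (p₁ˢ, p₂ˢ, aˢ) with (p₁ˢ,p₂ˢ) ≠ (0,0) and constants r_s > 0, let τ_s(x) = p₁ˢx₁ + p₂ˢx₂ − aˢ with linear part T_s, and on K = {x ∈ ℍ² : τ_s(x) ≠ 0 for all s} define g_x(v,w) = ⟪v,w⟫ + Σ_s r_s² ⟪T_s(v), T_s(w)⟫ / ‖τ_s(x)‖². Then g_x(J_r v, J_r w) = g_x(v,w) for all x ∈ K, all v,w ∈ ℍ², and r = 1,2,3. -/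
open RealInnerProductSpace

/-- The imaginary units of the quaternions. -/
def quatUnit : Fin 3 → Quaternion ℝ :=
  ![⟨0, 1, 0, 0⟩, ⟨0, 0, 1, 0⟩, ⟨0, 0, 0, 1⟩]

/-- The real inner product on ℍ², `⟪u,v⟫ = Re(ū₁v₁) + Re(ū₂v₂)`. -/
noncomputable def innerH2 (u v : Quaternion ℝ × Quaternion ℝ) : ℝ :=
  ⟪u.1, v.1⟫ + ⟪u.2, v.2⟫

lemma key (r : Fin 3) (a b : Quaternion ℝ) :
    ⟪-(a * quatUnit r), -(b * quatUnit r)⟫ = ⟪a, b⟫ := by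
  fin_cases r <;>
    simp [Quaternion.inner_def, quatUnit] <;> erw [Quaternion.re_mul, Quaternion.re_mul, Quaternion.imI_mul, Quaternion.imI_mul, Quaternion.imJ_mul, Quaternion.imJ_mul, Quaternion.imK_mul, Quaternion.imK_mul] <;> simp <;> ring

/-- The superposed intersecting NS-5-brane metric
`g_x(v,w) = ⟪v,w⟫ + Σ_s r_s² ⟪T_s v, T_s w⟫ / ‖τ_s x‖²` on
`K = {x ∈ ℍ² : τ_s(x) ≠ 0 for all s}` is hermitian with respect to the
hypercomplex structure `J` induced by right quaternionic multiplication,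
acting componentwise on ℍ². -/
theorem superposed_ns5brane_metric_hermitian_right
    (n : ℕ) (p₁ p₂ a : Fin n → Quaternion ℝ) (rs : Fin n → ℝ)
    (hp : ∀ s, (p₁ s, p₂ s) ≠ (0, 0)) (hr : ∀ s, 0 < rs s) :
    ∀ x : Quaternion ℝ × Quaternion ℝ,
      (∀ s, p₁ s * x.1 + p₂ s * x.2 - a s ≠ 0) →
      ∀ v w : Quaternion ℝ × Quaternion ℝ, ∀ r : Fin 3,
        (innerH2 (-(v.1 * quatUnit r), -(v.2 * quatUnit r))
            (-(w.1 * quatUnit r), -(w.2 * quatUnit r)) +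
          ∑ s, (rs s) ^ 2 *
            ⟪p₁ s * -(v.1 * quatUnit r) + p₂ s * -(v.2 * quatUnit r),
              p₁ s * -(w.1 * quatUnit r) + p₂ s * -(w.2 * quatUnit r)⟫ /
              ‖p₁ s * x.1 + p₂ s * x.2 - a s‖ ^ 2) =
        (innerH2 v w +
          ∑ s, (rs s) ^ 2 *
            ⟪p₁ s * v.1 + p₂ s * v.2, p₁ s * w.1 + p₂ s * w.2⟫ /
              ‖p₁ s * x.1 + p₂ s * x.2 - a s‖ ^ 2) := by
  intro x hx v w r
  have h : ∀ q₁ q₂ u₁ u₂ : Quaternion ℝ,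
      q₁ * -(u₁ * quatUnit r) + q₂ * -(u₂ * quatUnit r)
        = -((q₁ * u₁ + q₂ * u₂) * quatUnit r) := by
    intro q₁ q₂ u₁ u₂
    rw [add_mul, neg_add, mul_assoc, mul_assoc, mul_neg, mul_neg]
  simp only [innerH2, h, key]
end

section
/- If in the superposed intersecting NS-5-brane metric every pair of parameters satisfies the reality condition p̄₁ˢ p₂ˢ ∈ ℝ, then the metric is hermitian with respect to the hypercomplex structure I induced by left quaternionic multiplication as well: with τ_s(x) = p₁ˢx₁ + p₂ˢx₂ − aˢ, (p₁ˢ,p₂ˢ) ≠ (0,0), linear parts T_s, constants r_s > 0, and g_x(v,w) = ⟪v,w⟫ + Σ_s r_s² ⟪T_s(v), T_s(w)⟫ / ‖τ_s(x)‖² on K = {x ∈ ℍ² : τ_s(x) ≠ 0 for all s}, one has g_x(I_r v, I_r w) = g_x(v,w) for all x ∈ K, all v,w ∈ ℍ², and r = 1,2,3, where I_r(u₁,u₂) = (e_r u₁, e_r u₂) and (e₁,e₂,e₃) = (i,j,k). -/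
open RealInnerProductSpace

lemma re_mul_comm' (a b : Quaternion ℝ) : (a*b).re = (b*a).re := by
  simp [Quaternion.re_mul]; ring

lemma inner_mul_mul' (p q x y : Quaternion ℝ) :
    ⟪p*x, q*y⟫ = ((star q * p) * (x * star y)).re := by
  rw [Quaternion.inner_def]
  have h : (p*x) * star (q*y) = p * (x * star y) * star q := by
    rw [star_mul]; noncomm_ring
  rw [h, re_mul_comm', mul_assoc]

lemma pair_inv (e p q a b : Quaternion ℝ) (he : star e * e = 1)
    (r : ℝ) (hr : star q * p = (r : Quaternion ℝ)) :
    ⟪p*(e*a), q*(e*b)⟫ = ⟪p*a, q*b⟫ := by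
  rw [inner_mul_mul', inner_mul_mul', hr]
  have h1 : (e*a) * star (e*b) = e * (a * star b) * star e := by
    rw [star_mul]; noncomm_ring
  rw [h1]
  have h2 : ((r : Quaternion ℝ) * (e * (a * star b) * star e)).re
      = r * (e * (a * star b) * star e).re := by
    simp [Quaternion.re_mul]
  have h3 : ((r : Quaternion ℝ) * (a * star b)).re = r * (a * star b).re := by
    simp [Quaternion.re_mul]
  rw [h2, h3, re_mul_comm']
  have h4 : star e * (e * (a * star b)) = a * star b := by
    rw [← mul_assoc, he, one_mul]
  rw [h4]

lemma quatUnit_star_mul_self (r : Fin 3) :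
    star (quatUnit r) * quatUnit r = 1 := by
  fin_cases r <;>
    ext <;> simp [Quaternion.re_mul, Quaternion.imI_mul,
      Quaternion.imJ_mul, Quaternion.imK_mul, Quaternion.re_one, Quaternion.imI_one,
      Quaternion.imJ_one, Quaternion.imK_one] <;> simp [quatUnit]

/-- If every pair of parameters satisfies the reality condition
`p̄₁ˢ p₂ˢ ∈ ℝ`, then the superposed intersecting NS-5-brane metric
`g_x(v,w) = ⟪v,w⟫ + Σ_s r_s² ⟪T_s v, T_s w⟫ / ‖τ_s x‖²` on
`K = {x ∈ ℍ² : τ_s(x) ≠ 0 for all s}` is hermitian with respect to the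
hypercomplex structure `I` induced by left quaternionic multiplication as
well, where `I_r(u₁,u₂) = (e_r u₁, e_r u₂)`. -/
theorem superposed_ns5brane_metric_hermitian_left_of_real
    (n : ℕ) (p₁ p₂ a : Fin n → Quaternion ℝ) (rs : Fin n → ℝ)
    (hp : ∀ s, (p₁ s, p₂ s) ≠ (0, 0)) (hr : ∀ s, 0 < rs s)
    (hreal : ∀ s, ∃ c : ℝ, star (p₁ s) * p₂ s = (c : Quaternion ℝ)) :
    ∀ x : Quaternion ℝ × Quaternion ℝ,
      (∀ s, p₁ s * x.1 + p₂ s * x.2 - a s ≠ 0) →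
      ∀ v w : Quaternion ℝ × Quaternion ℝ, ∀ r : Fin 3,
        (innerH2 (quatUnit r * v.1, quatUnit r * v.2)
            (quatUnit r * w.1, quatUnit r * w.2) +
          ∑ s, (rs s) ^ 2 *
            ⟪p₁ s * (quatUnit r * v.1) + p₂ s * (quatUnit r * v.2),
              p₁ s * (quatUnit r * w.1) + p₂ s * (quatUnit r * w.2)⟫ /
              ‖p₁ s * x.1 + p₂ s * x.2 - a s‖ ^ 2) =
        (innerH2 v w +
          ∑ s, (rs s) ^ 2 *
            ⟪p₁ s * v.1 + p₂ s * v.2, p₁ s * w.1 + p₂ s * w.2⟫ /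
              ‖p₁ s * x.1 + p₂ s * x.2 - a s‖ ^ 2) := by
  intro x hx v w r
  set e := quatUnit r with he_def
  have he : star e * e = 1 := quatUnit_star_mul_self r
  have hunit : ∀ a b : Quaternion ℝ, ⟪e*a, e*b⟫ = ⟪a, b⟫ := by
    intro a b
    have := pair_inv e 1 1 a b he 1 (by simp)
    simpa using this
  congr 1
  · simp [innerH2, hunit]
  · refine Finset.sum_congr rfl fun s _ => ?_
    congr 1
    congr 1
    obtain ⟨c, hc⟩ := hreal s
    have hc' : star (p₂ s) * p₁ s = (c : Quaternion ℝ) := by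
      have := congrArg star hc
      simpa [star_mul] using this
    have h11 : star (p₁ s) * p₁ s = ((Quaternion.normSq (p₁ s) : ℝ) : Quaternion ℝ) := by
      rw [Quaternion.star_mul_self]
    have h22 : star (p₂ s) * p₂ s = ((Quaternion.normSq (p₂ s) : ℝ) : Quaternion ℝ) := by
      rw [Quaternion.star_mul_self]
    rw [inner_add_left, inner_add_left, inner_add_right, inner_add_right,
        inner_add_right, inner_add_right]
    rw [pair_inv e (p₁ s) (p₁ s) v.1 w.1 he _ h11,
        pair_inv e (p₂ s) (p₁ s) v.2 w.1 he c hc,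
        pair_inv e (p₁ s) (p₂ s) v.1 w.2 he c hc',
        pair_inv e (p₂ s) (p₂ s) v.2 w.2 he _ h22]
end

section
/- Every quaternionic line in ℍ² is calibrated by the quaternionic calibration form φ_J: for every u ∈ ℍ² with ⟪u,u⟫ = 1, the four vectors u, J₁u, J₂u, J₃u form an orthonormal family in ℍ², and φ_J(u, J₁u, J₂u, J₃u) = 1. -/
open RealInnerProductSpace

/-- The hypercomplex structure on ℍ² given by componentwise right quaternionic
multiplication, `J_r(u₁,u₂) = (-u₁ e_r, -u₂ e_r)`. -/
noncomputable def Jact (r : Fin 3) (u : Quaternion ℝ × Quaternion ℝ) : Quaternion ℝ × Quaternion ℝ :=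
  (-(u.1 * quatUnit r), -(u.2 * quatUnit r))

/-- The Kähler two-forms `ω_r(u,v) = ⟪J_r u, v⟫` on ℍ². -/
noncomputable def omegaJ (r : Fin 3) (u v : Quaternion ℝ × Quaternion ℝ) : ℝ :=
  innerH2 (Jact r u) v

/-- The quaternionic calibration form `φ_J = (1/3) Σ_r ω_{J_r} ∧ ω_{J_r}`,
evaluated on four vectors. -/
noncomputable def phiJ (e₁ e₂ e₃ e₄ : Quaternion ℝ × Quaternion ℝ) : ℝ :=
  (1 / 3) * ∑ r : Fin 3,
    (omegaJ r e₁ e₂ * omegaJ r e₃ e₄ - omegaJ r e₁ e₃ * omegaJ r e₂ e₄ +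
      omegaJ r e₁ e₄ * omegaJ r e₂ e₃)

lemma inner_comp (a b : Quaternion ℝ) :
    ⟪a,b⟫ = a.re*b.re + a.imI*b.imI + a.imJ*b.imJ + a.imK*b.imK := by
  simp [Quaternion.inner_def, Quaternion.re_mul]

@[simp]
lemma qu0_re : (quatUnit 0).re = 0 := rfl

@[simp]
lemma qu0_imI : (quatUnit 0).imI = 1 := rfl

@[simp]
lemma qu0_imJ : (quatUnit 0).imJ = 0 := rfl

@[simp]
lemma qu0_imK : (quatUnit 0).imK = 0 := rfl

@[simp]
lemma qu1_re : (quatUnit 1).re = 0 := rfl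

@[simp]
lemma qu1_imI : (quatUnit 1).imI = 0 := rfl

@[simp]
lemma qu1_imJ : (quatUnit 1).imJ = 1 := rfl

@[simp]
lemma qu1_imK : (quatUnit 1).imK = 0 := rfl

@[simp]
lemma qu2_re : (quatUnit 2).re = 0 := rfl

@[simp]
lemma qu2_imI : (quatUnit 2).imI = 0 := rfl

@[simp]
lemma qu2_imJ : (quatUnit 2).imJ = 0 := rfl

@[simp]
lemma qu2_imK : (quatUnit 2).imK = 1 := rfl

set_option maxHeartbeats 4000000 in
/-- Every quaternionic line in ℍ² is calibrated by `φ_J`: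
for every unit vector `u ∈ ℍ²`, the four vectors `u, J₁u, J₂u, J₃u` are an
orthonormal family and `φ_J(u, J₁u, J₂u, J₃u) = 1`. -/
theorem quaternionic_line_calibrated (u : Quaternion ℝ × Quaternion ℝ)
    (hu : innerH2 u u = 1) :
    (∀ a b : Fin 4,
        innerH2 (![u, Jact 0 u, Jact 1 u, Jact 2 u] a)
            (![u, Jact 0 u, Jact 1 u, Jact 2 u] b) =
          if a = b then 1 else 0) ∧
    phiJ u (Jact 0 u) (Jact 1 u) (Jact 2 u) = 1 := by
  obtain ⟨p, q⟩ := u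
  simp only [innerH2, inner_comp] at hu
  constructor
  · intro a b
    fin_cases a <;> fin_cases b <;>
      · simp only [Matrix.cons_val_zero, Matrix.cons_val_one, Matrix.head_cons,
          Matrix.cons_val_two, Matrix.tail_cons, Matrix.cons_val_three,
          innerH2, Jact, qu0_re, qu0_imI, qu0_imJ, qu0_imK, qu1_re, qu1_imI, qu1_imJ, qu1_imK, qu2_re, qu2_imI, qu2_imJ, qu2_imK, inner_comp, Quaternion.re_neg, Quaternion.imI_neg,
          Quaternion.imJ_neg, Quaternion.imK_neg, Quaternion.re_mul,
          Quaternion.imI_mul, Quaternion.imJ_mul, Quaternion.imK_mul]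
        norm_num [Fin.ext_iff]
        first | ring1 | linear_combination hu
  · simp only [phiJ, omegaJ, innerH2, Jact, qu0_re, qu0_imI, qu0_imJ, qu0_imK, qu1_re, qu1_imI, qu1_imJ, qu1_imK, qu2_re, qu2_imI, qu2_imJ, qu2_imK, Fin.sum_univ_three,
      Matrix.cons_val_zero, Matrix.cons_val_one, Matrix.head_cons,
      Matrix.cons_val_two, Matrix.tail_cons,
      inner_comp, Quaternion.re_neg, Quaternion.imI_neg,
      Quaternion.imJ_neg, Quaternion.imK_neg, Quaternion.re_mul,
      Quaternion.imI_mul, Quaternion.imJ_mul, Quaternion.imK_mul]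
    linear_combination (p.re*p.re+p.imI*p.imI+p.imJ*p.imJ+p.imK*p.imK+q.re*q.re+q.imI*q.imI+q.imJ*q.imJ+q.imK*q.imK + 1) * hu
end

section
/- The superposed harmonic function of intersecting NS-5-branes is harmonic: given finitely many triples (p₁ˢ, p₂ˢ, aˢ) ∈ ℍ × ℍ × ℍ with (p₁ˢ,p₂ˢ) ≠ (0,0) and constants c_s ∈ ℝ, the function h(x) = 1 + Σ_s c_s / ‖p₁ˢ x₁ + p₂ˢ x₂ − aˢ‖² is harmonic on the open set {x ∈ ℍ² : p₁ˢ x₁ + p₂ˢ x₂ − aˢ ≠ 0 for all s}, identifying ℍ² with ℝ⁸ via the quaternionic norm. -/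
open scoped RealInnerProductSpace Topology

set_option synthInstance.maxHeartbeats 1000000
set_option maxHeartbeats 2000000

noncomputable section


/-- The standard orthonormal basis `1, i, j, k` of the quaternions, which
identifies ℍ with ℝ⁴ (and ℍ² with ℝ⁸) via the quaternionic norm. -/
def quatBasis : Fin 4 → Quaternion ℝ :=
  ![⟨1, 0, 0, 0⟩, ⟨0, 1, 0, 0⟩, ⟨0, 0, 1, 0⟩, ⟨0, 0, 0, 1⟩]


namespace NS5aux

abbrev Q := Quaternion ℝ

lemma normq (u : Q) :
    ‖u‖ ^ 2 = u.re ^ 2 + u.imI ^ 2 + u.imJ ^ 2 + u.imK ^ 2 := by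
  rw [sq, ← Quaternion.normSq_eq_norm_mul_self, Quaternion.normSq_def']

lemma qB2 (u p : Q) :
    ∑ b : Fin 4, (⟪u, p * quatBasis b⟫ : ℝ) ^ 2 = ‖u‖ ^ 2 * ‖p‖ ^ 2 := by
  rw [normq, normq]
  simp only [Fin.sum_univ_four, quatBasis, Quaternion.inner_def,
    Matrix.cons_val_zero, Matrix.cons_val_one, Matrix.head_cons,
    Matrix.cons_val_two, Matrix.tail_cons, Matrix.cons_val_three, Matrix.cons_val,
    Quaternion.re_mul, Quaternion.imI_mul, Quaternion.imJ_mul, Quaternion.imK_mul,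
    Quaternion.re_star, Quaternion.imI_star, Quaternion.imJ_star, Quaternion.imK_star]
  show _ = _
  ring

lemma qB1 (p : Q) :
    ∑ b : Fin 4, (⟪p * quatBasis b, p * quatBasis b⟫ : ℝ) = 4 * ‖p‖ ^ 2 := by
  rw [normq]
  simp only [Fin.sum_univ_four, quatBasis, Quaternion.inner_def,
    Matrix.cons_val_zero, Matrix.cons_val_one, Matrix.head_cons,
    Matrix.cons_val_two, Matrix.tail_cons, Matrix.cons_val_three, Matrix.cons_val,
    Quaternion.re_mul, Quaternion.imI_mul, Quaternion.imJ_mul, Quaternion.imK_mul,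
    Quaternion.re_star, Quaternion.imI_star, Quaternion.imJ_star, Quaternion.imK_star]
  show _ = _
  ring

/-- The linear map `z ↦ p * z.1 + q * z.2`. -/
def Amap (p q : Q) : (Q × Q) →L[ℝ] Q :=
  ((ContinuousLinearMap.mul ℝ Q p).comp (ContinuousLinearMap.fst ℝ Q Q)) +
  ((ContinuousLinearMap.mul ℝ Q q).comp (ContinuousLinearMap.snd ℝ Q Q))

lemma Amap_apply (p q : Q) (z : Q × Q) : Amap p q z = p * z.1 + q * z.2 := rfl

lemma hasFDerivAt_term (p q a : Q) (c : ℝ) (y : Q × Q) (h : Amap p q y - a ≠ 0) :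
    HasFDerivAt (fun z : Q × Q => c / ‖Amap p q z - a‖ ^ 2)
      ((c * -(((‖Amap p q y - a‖ ^ 2) ^ 2)⁻¹)) •
        ((2 : ℕ) • ((innerSL ℝ (Amap p q y - a)).comp (Amap p q)))) y := by
  have h1 : HasFDerivAt (fun z : Q × Q => Amap p q z - a) (Amap p q) y :=
    (Amap p q).hasFDerivAt.sub_const a
  have h2 := h1.norm_sq
  have ht : (‖Amap p q y - a‖ ^ 2 : ℝ) ≠ 0 := pow_ne_zero _ (norm_ne_zero_iff.mpr h)
  have h3 : HasDerivAt (fun t : ℝ => c * t⁻¹)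
      (c * -((‖Amap p q y - a‖ ^ 2) ^ 2)⁻¹) (‖Amap p q y - a‖ ^ 2) := by
    simpa [div_eq_mul_inv] using (hasDerivAt_inv ht).const_mul c
  have key := h3.comp_hasFDerivAt y h2
  have hfun : (fun z : Q × Q => c / ‖Amap p q z - a‖ ^ 2) =
      ((fun t : ℝ => c * t⁻¹) ∘ fun z : Q × Q => ‖Amap p q z - a‖ ^ 2) := by
    funext z; simp [div_eq_mul_inv, Function.comp]
  rw [hfun]
  exact key

variable {n : ℕ}

/-- Derivative of the full superposed function. -/
lemma hasFDerivAt_F (p₁ p₂ a : Fin n → Q) (c : Fin n → ℝ) (y : Q × Q)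
    (h : ∀ s, Amap (p₁ s) (p₂ s) y - a s ≠ 0) :
    HasFDerivAt
      (fun z : Q × Q => 1 + ∑ s, c s / ‖Amap (p₁ s) (p₂ s) z - a s‖ ^ 2)
      (∑ s, (c s * -(((‖Amap (p₁ s) (p₂ s) y - a s‖ ^ 2) ^ 2)⁻¹)) •
        ((2 : ℕ) • ((innerSL ℝ (Amap (p₁ s) (p₂ s) y - a s)).comp (Amap (p₁ s) (p₂ s))))) y := by
  exact (HasFDerivAt.fun_sum fun s _ =>
    hasFDerivAt_term (p₁ s) (p₂ s) (a s) (c s) y (h s)).const_add 1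

/-- First derivative applied to a vector. -/
lemma fderiv_F_apply (p₁ p₂ a : Fin n → Q) (c : Fin n → ℝ) (y : Q × Q)
    (h : ∀ s, Amap (p₁ s) (p₂ s) y - a s ≠ 0) (v : Q × Q) :
    fderiv ℝ (fun z : Q × Q => 1 + ∑ s, c s / ‖Amap (p₁ s) (p₂ s) z - a s‖ ^ 2) y v =
      ∑ s, (c s * -(((‖Amap (p₁ s) (p₂ s) y - a s‖ ^ 2) ^ 2)⁻¹)) *
        (2 * ⟪Amap (p₁ s) (p₂ s) y - a s, Amap (p₁ s) (p₂ s) v⟫) := by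
  rw [(hasFDerivAt_F p₁ p₂ a c y h).fderiv, ContinuousLinearMap.sum_apply]
  refine Finset.sum_congr rfl fun s _ => ?_
  simp only [ContinuousLinearMap.smul_apply, ContinuousLinearMap.comp_apply,
    innerSL_apply_apply, smul_eq_mul, nsmul_eq_mul, Nat.cast_ofNat]

end NS5aux

namespace NS5aux2
open NS5aux

/-- Second-derivative building block. -/
lemma hasFDerivAt_Phi_term (p q a : Q) (c : ℝ) (v : Q × Q) (y : Q × Q)
    (h : Amap p q y - a ≠ 0) :
    HasFDerivAt
      (fun y' : Q × Q => (c * -(((‖Amap p q y' - a‖ ^ 2) ^ 2)⁻¹)) *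
        (2 * ⟪Amap p q y' - a, Amap p q v⟫))
      ((c * -(((‖Amap p q y - a‖ ^ 2) ^ 2)⁻¹)) •
          ((2 : ℝ) • ((innerSL ℝ (Amap p q v)).comp (Amap p q))) +
        (2 * ⟪Amap p q y - a, Amap p q v⟫) •
          ((c * -(-((2 : ℕ) * (‖Amap p q y - a‖ ^ 2) ^ 1) / ((‖Amap p q y - a‖ ^ 2) ^ 2) ^ 2)) •
            ((2 : ℕ) • ((innerSL ℝ (Amap p q y - a)).comp (Amap p q))))) y := by
  have h1 : HasFDerivAt (fun z : Q × Q => Amap p q z - a) (Amap p q) y :=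
    (Amap p q).hasFDerivAt.sub_const a
  have h2 := h1.norm_sq
  have ht : (‖Amap p q y - a‖ ^ 2 : ℝ) ≠ 0 := pow_ne_zero _ (norm_ne_zero_iff.mpr h)
  have hβt : HasDerivAt (fun t : ℝ => c * -((t ^ 2)⁻¹))
      (c * -(-((2 : ℕ) * (‖Amap p q y - a‖ ^ 2) ^ 1) / ((‖Amap p q y - a‖ ^ 2) ^ 2) ^ 2))
      (‖Amap p q y - a‖ ^ 2) :=
    (((hasDerivAt_pow 2 (‖Amap p q y - a‖ ^ 2)).inv (pow_ne_zero 2 ht)).neg).const_mul c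
  have hβ := hβt.comp_hasFDerivAt y h2
  have hβfun : (fun y' : Q × Q => c * -(((‖Amap p q y' - a‖ ^ 2) ^ 2)⁻¹)) =
      ((fun t : ℝ => c * -((t ^ 2)⁻¹)) ∘ fun z : Q × Q => ‖Amap p q z - a‖ ^ 2) := rfl
  have hβ' : HasFDerivAt (fun y' : Q × Q => c * -(((‖Amap p q y' - a‖ ^ 2) ^ 2)⁻¹))
      ((c * -(-((2 : ℕ) * (‖Amap p q y - a‖ ^ 2) ^ 1) / ((‖Amap p q y - a‖ ^ 2) ^ 2) ^ 2)) •
        ((2 : ℕ) • ((innerSL ℝ (Amap p q y - a)).comp (Amap p q)))) y := by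
    rw [hβfun]; exact hβ
  have hγ0 : HasFDerivAt (fun y' : Q × Q => (⟪Amap p q v, Amap p q y' - a⟫ : ℝ))
      ((innerSL ℝ (Amap p q v)).comp (Amap p q)) y := by
    exact ((innerSL ℝ (Amap p q v)).hasFDerivAt).comp y h1
  have hγ1 : HasFDerivAt (fun y' : Q × Q => (⟪Amap p q y' - a, Amap p q v⟫ : ℝ))
      ((innerSL ℝ (Amap p q v)).comp (Amap p q)) y := by
    have : (fun y' : Q × Q => (⟪Amap p q y' - a, Amap p q v⟫ : ℝ)) =
        (fun y' : Q × Q => (⟪Amap p q v, Amap p q y' - a⟫ : ℝ)) := by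
      funext y'; exact real_inner_comm _ _
    rw [this]; exact hγ0
  have hγ := hγ1.const_mul (2 : ℝ)
  exact hβ'.mul hγ

end NS5aux2

namespace NS5aux3
open NS5aux NS5aux2

variable {n : ℕ}

lemma second_deriv (p₁ p₂ a : Fin n → Q) (c : Fin n → ℝ) (x : Q × Q)
    (hx : ∀ s, Amap (p₁ s) (p₂ s) x - a s ≠ 0) (v : Q × Q) :
    fderiv ℝ (fun y : Q × Q =>
        fderiv ℝ (fun z : Q × Q => 1 + ∑ s, c s / ‖Amap (p₁ s) (p₂ s) z - a s‖ ^ 2) y v) x v =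
      ∑ s,
        ((c s * -(((‖Amap (p₁ s) (p₂ s) x - a s‖ ^ 2) ^ 2)⁻¹)) *
            (2 * ⟪Amap (p₁ s) (p₂ s) v, Amap (p₁ s) (p₂ s) v⟫) +
          (2 * ⟪Amap (p₁ s) (p₂ s) x - a s, Amap (p₁ s) (p₂ s) v⟫) *
            ((c s * -(-((2 : ℕ) * (‖Amap (p₁ s) (p₂ s) x - a s‖ ^ 2) ^ 1) /
                ((‖Amap (p₁ s) (p₂ s) x - a s‖ ^ 2) ^ 2) ^ 2)) *
              ((2 : ℕ) * ⟪Amap (p₁ s) (p₂ s) x - a s, Amap (p₁ s) (p₂ s) v⟫))) := by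
  have hopen : IsOpen {y : Q × Q | ∀ s, Amap (p₁ s) (p₂ s) y - a s ≠ 0} := by
    have hset : {y : Q × Q | ∀ s, Amap (p₁ s) (p₂ s) y - a s ≠ 0} =
        ⋂ s, (fun y : Q × Q => Amap (p₁ s) (p₂ s) y - a s) ⁻¹' {0}ᶜ := by
      ext y; simp [Set.mem_iInter]
    rw [hset]
    exact isOpen_iInter_of_finite fun s =>
      isOpen_compl_singleton.preimage (((Amap (p₁ s) (p₂ s)).continuous).sub continuous_const)
  have hU : ∀ᶠ y in 𝓝 x, ∀ s, Amap (p₁ s) (p₂ s) y - a s ≠ 0 :=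
    Filter.eventually_of_mem (hopen.mem_nhds hx) fun y hy => hy
  have heq : (fun y : Q × Q =>
      fderiv ℝ (fun z : Q × Q => 1 + ∑ s, c s / ‖Amap (p₁ s) (p₂ s) z - a s‖ ^ 2) y v) =ᶠ[𝓝 x]
      (fun y : Q × Q => ∑ s, (c s * -(((‖Amap (p₁ s) (p₂ s) y - a s‖ ^ 2) ^ 2)⁻¹)) *
        (2 * ⟪Amap (p₁ s) (p₂ s) y - a s, Amap (p₁ s) (p₂ s) v⟫)) :=
    hU.mono fun y hy => fderiv_F_apply p₁ p₂ a c y hy v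
  rw [heq.fderiv_eq,
    (HasFDerivAt.fun_sum fun s (_ : s ∈ Finset.univ) =>
      hasFDerivAt_Phi_term (p₁ s) (p₂ s) (a s) (c s) v x (hx s)).fderiv,
    ContinuousLinearMap.sum_apply]
  refine Finset.sum_congr rfl fun s _ => ?_
  simp only [ContinuousLinearMap.add_apply, ContinuousLinearMap.smul_apply,
    ContinuousLinearMap.comp_apply, innerSL_apply_apply, smul_eq_mul, nsmul_eq_mul]

lemma sum_family (u p : Q) (c : ℝ) (hu : u ≠ 0) :
    ∑ b : Fin 4,
      ((c * -(((‖u‖ ^ 2) ^ 2)⁻¹)) * (2 * ⟪p * quatBasis b, p * quatBasis b⟫) +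
        (2 * ⟪u, p * quatBasis b⟫) *
          ((c * -(-((2 : ℕ) * (‖u‖ ^ 2) ^ 1) / ((‖u‖ ^ 2) ^ 2) ^ 2)) *
            ((2 : ℕ) * ⟪u, p * quatBasis b⟫))) = 0 := by
  have ht : (‖u‖ ^ 2 : ℝ) ≠ 0 := pow_ne_zero _ (norm_ne_zero_iff.mpr hu)
  have hform : ∀ b : Fin 4,
      ((c * -(((‖u‖ ^ 2) ^ 2)⁻¹)) * (2 * ⟪p * quatBasis b, p * quatBasis b⟫) +
        (2 * ⟪u, p * quatBasis b⟫) *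
          ((c * -(-((2 : ℕ) * (‖u‖ ^ 2) ^ 1) / ((‖u‖ ^ 2) ^ 2) ^ 2)) *
            ((2 : ℕ) * ⟪u, p * quatBasis b⟫))) =
      (c * -(((‖u‖ ^ 2) ^ 2)⁻¹) * 2) * ⟪p * quatBasis b, p * quatBasis b⟫ +
        (4 * (c * (((2 : ℕ) * (‖u‖ ^ 2) ^ 1) / ((‖u‖ ^ 2) ^ 2) ^ 2))) *
          (⟪u, p * quatBasis b⟫ : ℝ) ^ 2 := by
    intro b; push_cast; ring
  rw [Finset.sum_congr rfl fun b _ => hform b, Finset.sum_add_distrib,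
    ← Finset.mul_sum, ← Finset.mul_sum, qB1, qB2]
  field_simp
  ring

end NS5aux3

end

open NS5aux NS5aux2 NS5aux3 in
/-- Given finitely many triples `(p₁ˢ, p₂ˢ, aˢ)` with
`(p₁ˢ,p₂ˢ) ≠ (0,0)` and constants `c_s ∈ ℝ`, the superposed harmonic function
`h(x) = 1 + Σ_s c_s / ‖p₁ˢ x₁ + p₂ˢ x₂ - aˢ‖²` of intersecting NS-5-branes is
harmonic on `{x ∈ ℍ² : p₁ˢ x₁ + p₂ˢ x₂ - aˢ ≠ 0 for all s}`: the sum of its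
second derivatives along the eight coordinate directions of `ℍ² ≅ ℝ⁸`
vanishes there. -/
theorem superposed_ns5brane_function_harmonic
    (n : ℕ) (p₁ p₂ a : Fin n → Quaternion ℝ) (c : Fin n → ℝ)
    (hp : ∀ s, (p₁ s, p₂ s) ≠ (0, 0)) :
    ∀ x : Quaternion ℝ × Quaternion ℝ,
      (∀ s, p₁ s * x.1 + p₂ s * x.2 - a s ≠ 0) →
      (∑ b : Fin 4,
          fderiv ℝ
            (fun y : Quaternion ℝ × Quaternion ℝ =>
              fderiv ℝ
                (fun z : Quaternion ℝ × Quaternion ℝ =>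
                  1 + ∑ s, c s / ‖p₁ s * z.1 + p₂ s * z.2 - a s‖ ^ 2)
                y ((quatBasis b, 0) : Quaternion ℝ × Quaternion ℝ))
            x ((quatBasis b, 0) : Quaternion ℝ × Quaternion ℝ)) +
      (∑ b : Fin 4,
          fderiv ℝ
            (fun y : Quaternion ℝ × Quaternion ℝ =>
              fderiv ℝ
                (fun z : Quaternion ℝ × Quaternion ℝ =>
                  1 + ∑ s, c s / ‖p₁ s * z.1 + p₂ s * z.2 - a s‖ ^ 2)
                y ((0, quatBasis b) : Quaternion ℝ × Quaternion ℝ))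
            x ((0, quatBasis b) : Quaternion ℝ × Quaternion ℝ)) = 0 := by
  intro x hx0
  have hx : ∀ s, Amap (p₁ s) (p₂ s) x - a s ≠ 0 := hx0
  show
    (∑ b : Fin 4,
        fderiv ℝ
          (fun y : Q × Q =>
            fderiv ℝ
              (fun z : Q × Q => 1 + ∑ s, c s / ‖Amap (p₁ s) (p₂ s) z - a s‖ ^ 2)
              y ((quatBasis b, 0) : Q × Q))
          x ((quatBasis b, 0) : Q × Q)) +
    (∑ b : Fin 4,
        fderiv ℝ
          (fun y : Q × Q =>
            fderiv ℝ
              (fun z : Q × Q => 1 + ∑ s, c s / ‖Amap (p₁ s) (p₂ s) z - a s‖ ^ 2)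
              y ((0, quatBasis b) : Q × Q))
          x ((0, quatBasis b) : Q × Q)) = 0
  rw [Finset.sum_congr rfl fun b (_ : b ∈ Finset.univ) =>
      second_deriv p₁ p₂ a c x hx ((quatBasis b, 0) : Q × Q),
    Finset.sum_congr rfl fun b (_ : b ∈ Finset.univ) =>
      second_deriv p₁ p₂ a c x hx ((0, quatBasis b) : Q × Q)]
  conv_lhs =>
    congr
    · rw [Finset.sum_comm]
    · rw [Finset.sum_comm]
  have hA : ∀ s : Fin n, (∑ b : Fin 4,
      ((c s * -(((‖Amap (p₁ s) (p₂ s) x - a s‖ ^ 2) ^ 2)⁻¹)) *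
          (2 * ⟪Amap (p₁ s) (p₂ s) ((quatBasis b, 0) : Q × Q),
                Amap (p₁ s) (p₂ s) ((quatBasis b, 0) : Q × Q)⟫) +
        (2 * ⟪Amap (p₁ s) (p₂ s) x - a s, Amap (p₁ s) (p₂ s) ((quatBasis b, 0) : Q × Q)⟫) *
          ((c s * -(-((2 : ℕ) * (‖Amap (p₁ s) (p₂ s) x - a s‖ ^ 2) ^ 1) /
              ((‖Amap (p₁ s) (p₂ s) x - a s‖ ^ 2) ^ 2) ^ 2)) *
            ((2 : ℕ) * ⟪Amap (p₁ s) (p₂ s) x - a s,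
                Amap (p₁ s) (p₂ s) ((quatBasis b, 0) : Q × Q)⟫)))) = 0 := by
    intro s
    have := sum_family (Amap (p₁ s) (p₂ s) x - a s) (p₁ s) (c s) (hx s)
    simpa only [Amap_apply, mul_zero, add_zero] using this
  have hB : ∀ s : Fin n, (∑ b : Fin 4,
      ((c s * -(((‖Amap (p₁ s) (p₂ s) x - a s‖ ^ 2) ^ 2)⁻¹)) *
          (2 * ⟪Amap (p₁ s) (p₂ s) ((0, quatBasis b) : Q × Q),
                Amap (p₁ s) (p₂ s) ((0, quatBasis b) : Q × Q)⟫) +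
        (2 * ⟪Amap (p₁ s) (p₂ s) x - a s, Amap (p₁ s) (p₂ s) ((0, quatBasis b) : Q × Q)⟫) *
          ((c s * -(-((2 : ℕ) * (‖Amap (p₁ s) (p₂ s) x - a s‖ ^ 2) ^ 1) /
              ((‖Amap (p₁ s) (p₂ s) x - a s‖ ^ 2) ^ 2) ^ 2)) *
            ((2 : ℕ) * ⟪Amap (p₁ s) (p₂ s) x - a s,
                Amap (p₁ s) (p₂ s) ((0, quatBasis b) : Q × Q)⟫)))) = 0 := by
    intro s
    have := sum_family (Amap (p₁ s) (p₂ s) x - a s) (p₂ s) (c s) (hx s)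
    simpa only [Amap_apply, mul_zero, zero_add] using this
  rw [Finset.sum_eq_zero fun s _ => hA s, Finset.sum_eq_zero fun s _ => hB s, add_zero]
end
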